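/- Let n ≥ 1 be a natural number and let x_1, …, x_n be pairwise distinct non-negative real numbers, with a_i := (∏_{j≠i} x_j) / (∏_{j≠i} (x_j − x_i)). Then ∏_{i=1}^n (1 + x_i)^{a_i} = exp((1/n) ∏_{i=1}^n x_i) holds if and only if x_i = 0 for some i ∈ {1, …, n}. -/

import Mathlib

open Finset Polynomial

lemma key_sum_eq {n : ℕ} (hn : 1 ≤ n) (x : Fin n → ℝ)
    (hne : ∀ i, x i ≠ 0) (hinj : Function.Injective x) (s : ℝ) :
    ∑ i, (∏ j, x j) / (∏ j ∈ univ.erase i, (x j - x i)) * ∏ k ∈ univ.erase i, (1 + x k * s)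
      = (∏ i, x i) * s ^ (n - 1) := by
  have hd : ∀ i, (∏ j ∈ univ.erase i, (x j - x i)) ≠ 0 := fun i =>
    prod_ne_zero_iff.2 fun j hj => sub_ne_zero.2 fun h => (mem_erase.1 hj).1 (hinj h)
  set Q : ℝ[X] := (∑ i, C ((∏ j, x j) / (∏ j ∈ univ.erase i, (x j - x i))) *
      ∏ k ∈ univ.erase i, (1 + C (x k) * X)) - C (∏ i, x i) * X ^ (n - 1) with hQdef
  have hQ0 : Q = 0 := by
    apply eq_zero_of_natDegree_lt_card_of_eval_eq_zero Q
      (f := fun i => -(x i)⁻¹)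
    · intro i j h
      exact hinj (inv_injective (neg_injective h))
    · intro i
      have heval : ∀ i', Polynomial.eval (-(x i)⁻¹)
          (C ((∏ j, x j) / (∏ j ∈ univ.erase i', (x j - x i'))) *
            ∏ k ∈ univ.erase i', (1 + C (x k) * X)) =
          (∏ j, x j) / (∏ j ∈ univ.erase i', (x j - x i')) *
            ∏ k ∈ univ.erase i', (1 + x k * -(x i)⁻¹) := by
        intro i'
        simp [eval_prod]
      rw [hQdef, eval_sub, eval_finset_sum]
      rw [Finset.sum_eq_single i]
      · rw [heval i]
        have h1 : ∀ k ∈ univ.erase i, (1 + x k * -(x i)⁻¹) = (x i - x k) / x i := by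
          intro k _
          field_simp [hne i]
          ring
        rw [Finset.prod_congr rfl h1, Finset.prod_div_distrib, Finset.prod_const,
          card_erase_of_mem (mem_univ i), card_univ, Fintype.card_fin]
        have h2 : ∏ k ∈ univ.erase i, (x i - x k)
            = (-1 : ℝ) ^ (n - 1) * ∏ k ∈ univ.erase i, (x k - x i) := by
          have hc : ∀ k ∈ univ.erase i, x i - x k = (-1) * (x k - x i) := fun k _ => by ring
          rw [Finset.prod_congr rfl hc, Finset.prod_mul_distrib, Finset.prod_const,
            card_erase_of_mem (mem_univ i), card_univ, Fintype.card_fin]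
        rw [h2, eval_mul, eval_C, eval_pow, eval_X, sub_eq_zero,
          show -(x i)⁻¹ = (-1) * (x i)⁻¹ by ring, mul_pow, inv_pow]
        field_simp
        rw [div_eq_div_iff (mul_ne_zero (hd i) (pow_ne_zero _ (hne i))) (pow_ne_zero _ (hne i))]
        ring
      · intro i' _ hi'
        rw [heval i']
        have hz : ∏ k ∈ univ.erase i', (1 + x k * -(x i)⁻¹) = 0 :=
          Finset.prod_eq_zero (mem_erase.2 ⟨hi'.symm, mem_univ i⟩)
            (by rw [mul_neg, mul_inv_cancel₀ (hne i)]; ring)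
        rw [hz, mul_zero]
      · intro h; exact absurd (mem_univ i) h
    · rw [Fintype.card_fin]
      have h1 : natDegree (∑ i, C ((∏ j, x j) / (∏ j ∈ univ.erase i, (x j - x i))) *
          ∏ k ∈ univ.erase i, (1 + C (x k) * X)) ≤ n - 1 := by
        apply natDegree_sum_le_of_forall_le
        intro i _
        refine (natDegree_C_mul_le _ _).trans ?_
        refine (natDegree_prod_le _ _).trans ?_
        calc ∑ k ∈ univ.erase i, (1 + C (x k) * X).natDegree
            ≤ ∑ k ∈ univ.erase i, 1 := by
              refine Finset.sum_le_sum fun k _ => ?_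
              refine (natDegree_add_le _ _).trans ?_
              simp [natDegree_C_mul_le, (natDegree_C_mul_le (x k) X).trans natDegree_X_le]
          _ = n - 1 := by
              simp [card_erase_of_mem (mem_univ i), card_univ]
      have h2 : natDegree (C (∏ i, x i) * X ^ (n - 1) : ℝ[X]) ≤ n - 1 :=
        (natDegree_C_mul_le _ _).trans (natDegree_X_pow_le _)
      refine lt_of_le_of_lt ((natDegree_sub_le _ _).trans (max_le h1 h2)) ?_
      omega
  have := congrArg (Polynomial.eval s) hQ0
  rw [hQdef] at this
  simp only [eval_sub, eval_finset_sum, eval_mul, eval_C, eval_pow, eval_X, eval_prod,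
    eval_add, eval_one, eval_zero] at this
  linarith [this]

lemma strict_lt {n : ℕ} (hn : 1 ≤ n) (x : Fin n → ℝ) (hpos : ∀ i, 0 < x i)
    (hinj : Function.Injective x) :
    ∑ i, (∏ j ∈ univ.erase i, x j) / (∏ j ∈ univ.erase i, (x j - x i)) * Real.log (1 + x i)
      < (1 / n) * ∏ i, x i := by
  have hnR : (n : ℝ) ≠ 0 := Nat.cast_ne_zero.2 (by omega)
  have hne : ∀ i, x i ≠ 0 := fun i => (hpos i).ne'
  set a : Fin n → ℝ :=
    fun i => (∏ j ∈ univ.erase i, x j) / (∏ j ∈ univ.erase i, (x j - x i)) with ha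
  set G : ℝ → ℝ :=
    fun s => (∏ i, x i) / n * s ^ n - ∑ i, a i * Real.log (1 + x i * s) with hGdef
  set g' : ℝ → ℝ :=
    fun s => (∏ i, x i) * s ^ (n - 1) - ∑ i, a i * ((1 + x i * s)⁻¹ * x i) with hg'def
  have hpos1 : ∀ s : ℝ, 0 ≤ s → ∀ i, (0 : ℝ) < 1 + x i * s := by
    intro s hs i
    have := mul_nonneg (hpos i).le hs
    linarith
  have hG : ∀ s : ℝ, 0 ≤ s → HasDerivAt G (g' s) s := by
    intro s hs
    have h1 : HasDerivAt (fun s : ℝ => (∏ i, x i) / n * s ^ n)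
        ((∏ i, x i) * s ^ (n - 1)) s := by
      have h := (hasDerivAt_pow n s).const_mul ((∏ i, x i) / n)
      rw [show (∏ i, x i) * s ^ (n - 1) = (∏ i, x i) / n * (n * s ^ (n - 1)) by
        rw [← mul_assoc, div_mul_cancel₀ _ hnR]]
      exact h
    have h2 : HasDerivAt (fun s : ℝ => ∑ i, a i * Real.log (1 + x i * s))
        (∑ i, a i * ((1 + x i * s)⁻¹ * x i)) s := by
      apply HasDerivAt.fun_sum
      intro i _
      have hlin : HasDerivAt (fun s : ℝ => 1 + x i * s) (x i) s := by
        simpa using ((hasDerivAt_id s).const_mul (x i)).const_add 1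
      have hlog := (Real.hasDerivAt_log (hpos1 s hs i).ne').comp s hlin
      exact hlog.const_mul (a i)
    exact h1.sub h2
  have hNE : Nonempty (Fin n) := ⟨⟨0, hn⟩⟩
  have hgpos : ∀ s ∈ Set.Ioo (0:ℝ) 1, 0 < g' s := by
    intro s hs
    have hC : (1:ℝ) < ∏ i, (1 + x i * s) := by
      calc (1:ℝ) = ∏ _i : Fin n, 1 := by simp
        _ < ∏ i, (1 + x i * s) :=
          Finset.prod_lt_prod_of_nonempty (fun i _ => one_pos)
            (fun i _ => by nlinarith [hpos i, hs.1]) Finset.univ_nonempty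
    have hC0 : (0:ℝ) < ∏ i, (1 + x i * s) := lt_trans one_pos hC
    have hsum : ∑ i, a i * ((1 + x i * s)⁻¹ * x i)
        = (∏ i, x i) * s ^ (n - 1) / ∏ i, (1 + x i * s) := by
      rw [eq_div_iff hC0.ne', ← key_sum_eq hn x hne hinj s, Finset.sum_mul]
      refine Finset.sum_congr rfl fun i _ => ?_
      rw [ha]
      have hfact : ∏ k, (1 + x k * s) = (1 + x i * s) * ∏ k ∈ univ.erase i, (1 + x k * s) :=
        (Finset.mul_prod_erase univ _ (mem_univ i)).symm
      have hxprod : (∏ j, x j) = x i * ∏ j ∈ univ.erase i, x j :=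
        (Finset.mul_prod_erase univ x (mem_univ i)).symm
      rw [hfact, hxprod]
      have hne1 : (1 + x i * s) ≠ 0 := (hpos1 s hs.1.le i).ne'
      have hD : (∏ j ∈ univ.erase i, (x j - x i)) ≠ 0 :=
        prod_ne_zero_iff.2 fun j hj => sub_ne_zero.2 fun h => (mem_erase.1 hj).1 (hinj h)
      field_simp
    rw [hg'def]
    simp only
    rw [hsum]
    have h1 : 0 < (∏ i, x i) * s ^ (n - 1) := by
      apply mul_pos (Finset.prod_pos fun i _ => hpos i)
      exact pow_pos hs.1 _
    have := div_lt_self h1 hC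
    linarith
  have hmono : StrictMonoOn G (Set.Icc 0 1) := by
    apply strictMonoOn_of_deriv_pos (convex_Icc 0 1)
    · intro s hs
      exact (hG s hs.1).continuousAt.continuousWithinAt
    · rw [interior_Icc]
      intro s hs
      rw [(hG s hs.1.le).deriv]
      exact hgpos s hs
  have hlt := hmono (Set.left_mem_Icc.2 zero_le_one) (Set.right_mem_Icc.2 zero_le_one) one_pos
  have hG0 : G 0 = 0 := by
    simp [hGdef, zero_pow (by omega : n ≠ 0)]
  rw [hG0, hGdef] at hlt
  simp only [one_pow, mul_one] at hlt
  have : (∏ i, x i) / n = (1 / n) * ∏ i, x i := by ring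
  linarith [hlt]

theorem multivariate_basic_inequality_eq_iff (n : ℕ) (hn : 1 ≤ n) (x : Fin n → ℝ)
    (hx : ∀ i, 0 ≤ x i) (hinj : Function.Injective x) :
    (∏ i, (1 + x i) ^
        ((∏ j ∈ Finset.univ.erase i, x j) / (∏ j ∈ Finset.univ.erase i, (x j - x i))) =
      Real.exp ((1 / n) * ∏ i, x i)) ↔ ∃ i, x i = 0 := by
  constructor
  · intro heq
    by_contra hcon
    push_neg at hcon
    have hpos : ∀ i, 0 < x i := fun i => lt_of_le_of_ne (hx i) (Ne.symm (hcon i))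
    have hlhs : ∏ i, (1 + x i) ^
        ((∏ j ∈ Finset.univ.erase i, x j) / (∏ j ∈ Finset.univ.erase i, (x j - x i))) =
        Real.exp (∑ i, Real.log (1 + x i) *
          ((∏ j ∈ Finset.univ.erase i, x j) / (∏ j ∈ Finset.univ.erase i, (x j - x i)))) := by
      rw [Real.exp_sum]
      refine Finset.prod_congr rfl fun i _ => ?_
      rw [Real.rpow_def_of_pos (by linarith [hpos i])]
    rw [hlhs, Real.exp_eq_exp] at heq
    have hlt := strict_lt hn x hpos hinj
    rw [show (∑ i, Real.log (1 + x i) *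
          ((∏ j ∈ Finset.univ.erase i, x j) / (∏ j ∈ Finset.univ.erase i, (x j - x i))))
        = ∑ i, (∏ j ∈ univ.erase i, x j) / (∏ j ∈ univ.erase i, (x j - x i)) *
            Real.log (1 + x i) from Finset.sum_congr rfl fun i _ => by ring] at heq
    linarith
  · rintro ⟨k, hk⟩
    rw [Finset.prod_eq_zero (mem_univ k) hk, mul_zero, Real.exp_zero]
    refine Finset.prod_eq_one fun i _ => ?_
    rcases eq_or_ne i k with rfl | hik
    · have hnum : (∏ j ∈ Finset.univ.erase i, x j) ≠ 0 := by
        refine prod_ne_zero_iff.2 fun j hj => fun h => (mem_erase.1 hj).1 ?_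
        exact hinj (h.trans hk.symm)
      have : (∏ j ∈ Finset.univ.erase i, (x j - x i)) = ∏ j ∈ Finset.univ.erase i, x j := by
        refine Finset.prod_congr rfl fun j _ => by rw [hk, sub_zero]
      rw [this, div_self hnum, hk]
      norm_num
    · have : (∏ j ∈ Finset.univ.erase i, x j) = 0 :=
        Finset.prod_eq_zero (mem_erase.2 ⟨Ne.symm hik, mem_univ k⟩) hk
      rw [this, zero_div, Real.rpow_zero]
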